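/- Let a ∈ C³[0,R] satisfy a(0)=0, a'>0 on (0,R), and a'' ≥ ωa on (0,R) for some ω ≥ 0. Let D = inf_{0<x<R} [(2n-3)a''/a + a'''/a'] and C = min{(D+2ω)/(2(n+2)), D/4}. Define G(x)=∫₀ˣ a^{n-1} ds and S(x)=Ga'/a - a^{n-1}/n. Then S(x) ≥ C·G(x)²/G'(x) for all x ∈ (0,R). -/

import Mathlib

open Set intervalIntegral MeasureTheory

lemma aux_nonneg {R : ℝ} (hR : 0 < R) (F : ℝ → ℝ) (hF : ContinuousOn F (Set.Icc 0 R))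
    (h0 : F 0 = 0)
    (hF' : ∀ x ∈ Set.Ioo (0:ℝ) R, ∃ y, 0 ≤ y ∧ HasDerivAt F y x) :
    ∀ x ∈ Set.Icc (0:ℝ) R, 0 ≤ F x := by
  have hmono : MonotoneOn F (Set.Icc 0 R) := by
    apply monotoneOn_of_deriv_nonneg (convex_Icc 0 R) hF
    · rw [interior_Icc]
      intro x hx
      obtain ⟨y, _, hy⟩ := hF' x hx
      exact hy.differentiableAt.differentiableWithinAt
    · rw [interior_Icc]
      intro x hx
      obtain ⟨y, hy0, hy⟩ := hF' x hx
      rw [hy.deriv]; exact hy0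
  intro x hx
  have := hmono (Set.left_mem_Icc.2 hR.le) hx hx.1
  rwa [h0] at this

set_option maxHeartbeats 1000000 in
theorem stmt_7 (R : ℝ) (hR : 0 < R) (n : ℕ) (hn : 2 < n)
    (ω : ℝ) (hω : 0 ≤ ω)
    (a : ℝ → ℝ) (ha : ContDiffOn ℝ 3 a (Set.Icc 0 R))
    (ha0 : a 0 = 0)
    (hapos : ∀ x ∈ Set.Ioo (0:ℝ) R, 0 < a x)
    (ha'pos : ∀ x ∈ Set.Ioo (0:ℝ) R, 0 < deriv a x)
    (ha'' : ∀ x ∈ Set.Ioo (0:ℝ) R, ω * a x ≤ deriv (deriv a) x)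
    (D : ℝ)
    (hD : IsGLB {y : ℝ | ∃ x ∈ Set.Ioo (0:ℝ) R,
      y = (2 * (n : ℝ) - 3) * deriv (deriv a) x / a x +
        deriv (deriv (deriv a)) x / deriv a x} D)
    (C : ℝ) (hC : C = min ((D + 2 * ω) / (2 * ((n : ℝ) + 2))) (D / 4)) :
    ∀ x ∈ Set.Ioo (0:ℝ) R,
      C * (∫ s in (0:ℝ)..x, a s ^ (n - 1)) ^ 2 / a x ^ (n - 1) ≤
        (∫ s in (0:ℝ)..x, a s ^ (n - 1)) * deriv a x / a x - a x ^ (n - 1) / n := by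
  obtain ⟨m, rfl⟩ : ∃ m, n = m + 3 := ⟨n - 3, by omega⟩
  clear hn
  simp only [show m + 3 - 1 = m + 2 from rfl]
  have hm3 : ((m:ℝ)+3) ≠ 0 := by positivity
  -- derivatives
  have huniq : UniqueDiffOn ℝ (Set.Icc (0:ℝ) R) := uniqueDiffOn_Icc hR
  set b := derivWithin a (Set.Icc (0:ℝ) R) with hbdef
  set c := derivWithin b (Set.Icc (0:ℝ) R) with hcdef
  set d := derivWithin c (Set.Icc (0:ℝ) R) with hddef
  have hb : ContDiffOn ℝ 2 b (Set.Icc 0 R) := ha.derivWithin huniq (by norm_num)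
  have hc : ContDiffOn ℝ 1 c (Set.Icc 0 R) := hb.derivWithin huniq (by norm_num)
  have hmem : ∀ x ∈ Set.Ioo (0:ℝ) R, Set.Icc (0:ℝ) R ∈ nhds x :=
    fun x hx => Icc_mem_nhds hx.1 hx.2
  have hax : ∀ x ∈ Set.Ioo (0:ℝ) R, HasDerivAt a (b x) x := fun x hx =>
    ((ha.differentiableOn (by norm_num) x (Ioo_subset_Icc_self hx)).hasDerivWithinAt).hasDerivAt
      (hmem x hx)
  have hbx : ∀ x ∈ Set.Ioo (0:ℝ) R, HasDerivAt b (c x) x := fun x hx =>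
    ((hb.differentiableOn (by norm_num) x (Ioo_subset_Icc_self hx)).hasDerivWithinAt).hasDerivAt
      (hmem x hx)
  have hcx : ∀ x ∈ Set.Ioo (0:ℝ) R, HasDerivAt c (d x) x := fun x hx =>
    ((hc.differentiableOn (by norm_num) x (Ioo_subset_Icc_self hx)).hasDerivWithinAt).hasDerivAt
      (hmem x hx)
  have hda : ∀ x ∈ Set.Ioo (0:ℝ) R, deriv a x = b x := fun x hx => (hax x hx).deriv
  have hdd : ∀ x ∈ Set.Ioo (0:ℝ) R, deriv (deriv a) x = c x := by
    intro x hx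
    have h1 : deriv a =ᶠ[nhds x] b := by
      filter_upwards [Ioo_mem_nhds hx.1 hx.2] with y hy using hda y hy
    rw [h1.deriv_eq]; exact (hbx x hx).deriv
  have hddd : ∀ x ∈ Set.Ioo (0:ℝ) R, deriv (deriv (deriv a)) x = d x := by
    intro x hx
    have h1 : deriv (deriv a) =ᶠ[nhds x] c := by
      filter_upwards [Ioo_mem_nhds hx.1 hx.2] with y hy using hdd y hy
    rw [h1.deriv_eq]; exact (hcx x hx).deriv
  -- restated hypotheses
  have hbpos : ∀ x ∈ Set.Ioo (0:ℝ) R, 0 < b x := fun x hx => hda x hx ▸ ha'pos x hx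
  have hcge : ∀ x ∈ Set.Ioo (0:ℝ) R, ω * a x ≤ c x := fun x hx => hdd x hx ▸ ha'' x hx
  have hDle : ∀ x ∈ Set.Ioo (0:ℝ) R,
      D ≤ (2*((m:ℝ)+3) - 3) * c x / a x + d x / b x := by
    intro x hx
    have h := hD.1 (Set.mem_setOf.2 ⟨x, hx, rfl⟩)
    rw [hdd x hx, hddd x hx, hda x hx] at h
    push_cast at h ⊢
    exact h
  have hC4 : 4 * C ≤ D := by
    have := min_le_right ((D + 2 * ω) / (2 * (((m:ℕ):ℝ)+3 + 2))) (D / 4)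
    rw [hC]; push_cast; linarith [this]
  have hC5 : 2*((m:ℝ)+5)*C ≤ D + 2*ω := by
    have h1 : C ≤ (D + 2 * ω) / (2 * ((((m:ℕ)+3:ℕ):ℝ) + 2)) := hC ▸ min_le_left _ _
    have h2 : ((((m:ℕ)+3:ℕ):ℝ) + 2) = (m:ℝ) + 5 := by push_cast; ring
    rw [h2] at h1
    rw [le_div_iff₀ (by positivity)] at h1
    linarith
  -- G
  set G : ℝ → ℝ := fun x => ∫ t in (0:ℝ)..x, a t ^ (m+2) with hGdef
  have hacont : ContinuousOn (fun t => a t ^ (m+2)) (Set.Icc 0 R) := ha.continuousOn.pow _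
  have hGcont : ContinuousOn G (Set.Icc 0 R) := by
    have := continuousOn_primitive_interval (a := (0:ℝ)) (b := R) (f := fun t => a t ^ (m+2))
      (μ := volume) (by rw [Set.uIcc_of_le hR.le]; exact hacont.integrableOn_Icc)
    rwa [Set.uIcc_of_le hR.le] at this
  have hG0 : G 0 = 0 := intervalIntegral.integral_same
  have hG' : ∀ x ∈ Set.Ioo (0:ℝ) R, HasDerivAt G (a x ^ (m+2)) x := by
    intro x hx
    exact intervalIntegral.integral_hasDerivAt_right
      ((hacont.mono (Set.Icc_subset_Icc le_rfl hx.2.le)).intervalIntegrable_of_Icc hx.1.le)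
      ((hacont.mono Set.Ioo_subset_Icc_self).stronglyMeasurableAtFilter isOpen_Ioo x hx)
      (hacont.continuousAt (Icc_mem_nhds hx.1 hx.2))
  have ha_nn : ∀ t ∈ Set.Ico (0:ℝ) R, 0 ≤ a t := by
    intro t ht
    rcases eq_or_lt_of_le ht.1 with h | h
    · exact le_of_eq (h ▸ ha0.symm)
    · exact (hapos t ⟨h, ht.2⟩).le
  have hGnn : ∀ x ∈ Set.Ioo (0:ℝ) R, 0 ≤ G x := by
    intro x hx
    exact intervalIntegral.integral_nonneg hx.1.le
      (fun t ht => pow_nonneg (ha_nn t ⟨ht.1, lt_of_le_of_lt ht.2 hx.2⟩) _)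
  -- Step F : G * b - a^(m+3)/(m+3) ≥ 0
  have hF : ∀ x ∈ Set.Icc (0:ℝ) R, 0 ≤ G x * b x - a x ^ (m+3) / ((m:ℝ)+3) := by
    have H := aux_nonneg hR (fun y => G y * b y - a y ^ (m+3) / ((m:ℝ)+3))
      ((hGcont.mul hb.continuousOn).sub ((ha.continuousOn.pow _).div_const _))
      (by simp [hG0, ha0, zero_pow])
      (by
        intro x hx
        refine ⟨G x * c x, mul_nonneg (hGnn x hx)
          (le_trans (mul_nonneg hω (hapos x hx).le) (hcge x hx)), ?_⟩
        have hcomb := ((hG' x hx).mul (hbx x hx)).sub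
          (((hax x hx).pow (m+3)).div_const ((m:ℝ)+3))
        convert hcomb using 1
        any_goals rfl
        push_cast
        field_simp
        ring)
    intro x hx; exact H x hx
  -- Step g
  have hg : ∀ x ∈ Set.Icc (0:ℝ) R, 0 ≤
      G x * (a x * c x + ((m:ℝ)+1) * b x ^ 2 - 2 * C * a x ^ 2)
        - ((m:ℝ)+1)/((m:ℝ)+3) * (a x ^ (m+3) * b x) := by
    have H := aux_nonneg hR
      (fun y => G y * (a y * c y + ((m:ℝ)+1) * b y ^ 2 - 2 * C * a y ^ 2)
        - ((m:ℝ)+1)/((m:ℝ)+3) * (a y ^ (m+3) * b y))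
      ((hGcont.mul (((ha.continuousOn.mul hc.continuousOn).add
          (continuousOn_const.mul (hb.continuousOn.pow 2))).sub
          (continuousOn_const.mul (ha.continuousOn.pow 2)))).sub
        (continuousOn_const.mul ((ha.continuousOn.pow (m+3)).mul hb.continuousOn)))
      (by simp [hG0, ha0, zero_pow])
      (by
        intro x hx
        have hax' := hax x hx; have hbx' := hbx x hx; have hcx' := hcx x hx
        have hGx' := hG' x hx
        have hcomb := (hGx'.mul (((hax'.mul hcx').add ((hbx'.pow 2).const_mul ((m:ℝ)+1))).sub
            ((hax'.pow 2).const_mul (2*C)))).sub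
          (((hax'.pow (m+3)).mul hbx').const_mul (((m:ℝ)+1)/((m:ℝ)+3)))
        have hap := hapos x hx
        have hbp := hbpos x hx
        have hPp : (0:ℝ) < a x ^ (m+2) := pow_pos hap _
        have hGn := hGnn x hx
        have hpow3 : a x ^ (m+3) = a x ^ (m+2) * a x := by
          rw [show m+3 = (m+2)+1 from rfl, pow_succ]
        -- G lower bound
        have hGb : a x ^ (m+2) * a x ≤ G x * b x * ((m:ℝ)+3) := by
          have h := hF x (Ioo_subset_Icc_self hx)
          rw [sub_nonneg, div_le_iff₀ (by positivity)] at h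
          rw [← hpow3]; exact h
        -- B0 lower bound
        set B0 : ℝ := a x * d x + (2*(m:ℝ)+3) * b x * c x - 4*C*a x*b x with hB0def
        have hB : a x * b x * (D - 4*C) ≤ B0 := by
          have h := hDle x hx
          rw [div_add_div _ _ (ne_of_gt hap) (ne_of_gt hbp), le_div_iff₀ (by positivity)] at h
          rw [hB0def]; nlinarith [h]
        have hB0nn : 0 ≤ B0 :=
          le_trans (by nlinarith [mul_pos hap hbp]) hB
        set y : ℝ := a x ^ (m+2) * (a x * c x + ((m:ℝ)+1) * b x ^ 2 - 2 * C * a x ^ 2)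
          + G x * B0
          - ((m:ℝ)+1) * a x ^ (m+2) * b x ^ 2
          - ((m:ℝ)+1)/((m:ℝ)+3) * (a x ^ (m+3) * c x) with hydef
        refine ⟨y, ?_, ?_⟩
        · have hyeq : ((m:ℝ)+3) * (b x * y) =
              2 * a x ^ (m+2) * a x * b x * c x
              - 2*((m:ℝ)+3)*C*(a x ^ (m+2) * a x ^ 2 * b x)
              + ((m:ℝ)+3) * b x * (G x * B0) := by
            rw [hydef, hB0def, hpow3]; field_simp; ring
          have hkey : 0 ≤ ((m:ℝ)+3) * (b x * y) := by
            rw [hyeq]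
            have t1 := mul_le_mul_of_nonneg_right hGb hB0nn
            have t2 := mul_le_mul_of_nonneg_left hB
              (by positivity : (0:ℝ) ≤ a x ^ (m+2) * a x)
            have t3 := mul_le_mul_of_nonneg_left (hcge x hx)
              (by positivity : (0:ℝ) ≤ 2 * a x ^ (m+2) * a x * b x)
            have t4 := mul_le_mul_of_nonneg_left hC5
              (by positivity : (0:ℝ) ≤ a x ^ (m+2) * a x ^ 2 * b x)
            nlinarith [t1, t2, t3, t4]
          have h1 : 0 ≤ b x * y :=
            (mul_nonneg_iff_of_pos_left (show (0:ℝ) < (m:ℝ)+3 by positivity)).mp hkey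
          exact (mul_nonneg_iff_of_pos_left hbp).mp h1
        · convert hcomb using 1
          any_goals rfl
          rw [hydef, hB0def]
          simp only [show m+3-1 = m+2 from rfl, show (2:ℕ)-1 = 1 from rfl, pow_one]
          simp only [Pi.mul_apply, Pi.pow_apply, Pi.add_apply, Pi.sub_apply]
          push_cast
          field_simp
          ring)
    intro x hx; exact H x hx
  -- Step f
  have hf : ∀ x ∈ Set.Icc (0:ℝ) R, 0 ≤
      G x * b x * a x ^ (m+1) - a x ^ (2*m+4) / ((m:ℝ)+3) - C * G x ^ 2 := by
    have H := aux_nonneg hR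
      (fun y => G y * b y * a y ^ (m+1) - a y ^ (2*m+4) / ((m:ℝ)+3) - C * G y ^ 2)
      ((((hGcont.mul hb.continuousOn).mul (ha.continuousOn.pow (m+1))).sub
        ((ha.continuousOn.pow (2*m+4)).div_const ((m:ℝ)+3))).sub (continuousOn_const.mul (hGcont.pow 2)))
      (by simp [hG0, ha0, zero_pow])
      (by
        intro x hx
        have hax' := hax x hx; have hbx' := hbx x hx
        have hGx' := hG' x hx
        have hcomb := ((((hGx'.mul hbx').mul (hax'.pow (m+1))).sub
          ((hax'.pow (2*m+4)).div_const ((m:ℝ)+3))).sub ((hGx'.pow 2).const_mul C))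
        refine ⟨a x ^ m * (G x * (a x * c x + ((m:ℝ)+1) * b x ^ 2 - 2 * C * a x ^ 2)
            - ((m:ℝ)+1)/((m:ℝ)+3) * (a x ^ (m+3) * b x)), ?_, by
          convert hcomb using 1
          any_goals rfl
          simp only [Pi.mul_apply, Pi.pow_apply, Pi.add_apply, Pi.sub_apply]
          push_cast
          field_simp
          ring⟩
        exact mul_nonneg (pow_nonneg (hapos x hx).le m) (hg x (Ioo_subset_Icc_self hx)))
    intro x hx; exact H x hx
  -- conclusion
  intro x hx
  have hap := hapos x hx
  have hfx := hf x (Ioo_subset_Icc_self hx)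
  rw [hda x hx]
  have hcast : (((m:ℕ)+3:ℕ):ℝ) = (m:ℝ)+3 := by push_cast; ring
  rw [div_le_iff₀ (by positivity : (0:ℝ) < a x ^ (m+2)), hcast]
  have heq : (G x * b x / a x - a x ^ (m+2) / ((m:ℝ)+3)) * a x ^ (m+2) =
      G x * b x * a x ^ (m+1) - a x ^ (2*m+4) / ((m:ℝ)+3) := by
    field_simp
    ring
  rw [heq]
  linarith
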